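/- The integer translates of the sinc function are orthonormal in L²(ℝ): for all integers m, n, the function x ↦ sinc(x − m)·sinc(x − n) is integrable over ℝ and ∫_ℝ sinc(x − m)·sinc(x − n) dx equals 1 if m = n and 0 otherwise. -/

import Mathlib

open MeasureTheory

/-- The sinc function: `sinc 0 = 1`, `sinc t = sin (π t) / (π t)` otherwise. -/
noncomputable def sinc (t : ℝ) : ℝ :=
  if t = 0 then 1 else Real.sin (Real.pi * t) / (Real.pi * t)

lemma sinc_of_ne {t : ℝ} (ht : t ≠ 0) :
    sinc t = Real.sin (Real.pi * t) / (Real.pi * t) := if_neg ht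

lemma measurable_sinc : Measurable sinc := by
  unfold sinc
  exact Measurable.ite (measurableSet_singleton 0) measurable_const
    ((Real.measurable_sin.comp (measurable_const.mul measurable_id)).div
      (measurable_const.mul measurable_id))

lemma sinc_sq_le (t : ℝ) : sinc t ^ 2 ≤ 2 / (1 + t ^ 2) := by
  rcases eq_or_ne t 0 with h | h
  · simp [sinc, h]
  · rw [sinc_of_ne h]
    have hπ := Real.pi_gt_three
    have h1 : Real.sin (Real.pi * t) ^ 2 ≤ 1 := by
      nlinarith [Real.neg_one_le_sin (Real.pi * t), Real.sin_le_one (Real.pi * t)]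
    have h2 : Real.sin (Real.pi * t) ^ 2 ≤ (Real.pi * t) ^ 2 := by
      have h3 := Real.abs_sin_le_abs (x := Real.pi * t)
      nlinarith [abs_nonneg (Real.sin (Real.pi * t)), sq_abs (Real.sin (Real.pi * t)),
        sq_abs (Real.pi * t), abs_nonneg (Real.pi * t)]
    have ht2 : (0:ℝ) < t ^ 2 := by positivity
    have hπt : (0:ℝ) < (Real.pi * t) ^ 2 := by positivity
    have hπ2 : (1:ℝ) ≤ Real.pi ^ 2 := by nlinarith
    have h4 : t ^ 2 ≤ (Real.pi * t) ^ 2 := by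
      nlinarith [mul_le_mul_of_nonneg_right hπ2 ht2.le]
    rw [div_pow, div_le_div_iff₀ hπt (by positivity)]
    nlinarith [mul_le_mul_of_nonneg_right h1 ht2.le, h2, h4]

lemma abs_sinc_mul_le (a b : ℝ) :
    |sinc a * sinc b| ≤ 1 / (1 + a ^ 2) + 1 / (1 + b ^ 2) := by
  have h1 := sinc_sq_le a
  have h2 := sinc_sq_le b
  have habs : |sinc a * sinc b| ≤ (sinc a ^ 2 + sinc b ^ 2) / 2 := by
    rw [abs_mul]
    nlinarith [sq_nonneg (|sinc a| - |sinc b|), sq_abs (sinc a), sq_abs (sinc b),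
      abs_nonneg (sinc a), abs_nonneg (sinc b)]
  calc |sinc a * sinc b| ≤ (sinc a ^ 2 + sinc b ^ 2) / 2 := habs
    _ ≤ (2 / (1 + a ^ 2) + 2 / (1 + b ^ 2)) / 2 := by linarith
    _ = 1 / (1 + a ^ 2) + 1 / (1 + b ^ 2) := by ring

lemma sinc_mul_integrable (m n : ℤ) :
    Integrable (fun x : ℝ => sinc (x - m) * sinc (x - n)) := by
  have h1 : Integrable (fun x : ℝ => (1 + x ^ 2)⁻¹) := integrable_inv_one_add_sq
  have hg : Integrable
      (fun x : ℝ => 1 / (1 + (x - (m:ℝ)) ^ 2) + 1 / (1 + (x - (n:ℝ)) ^ 2)) := by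
    simpa [one_div, Pi.add_def] using ((h1.comp_sub_right (m:ℝ)).add (h1.comp_sub_right (n:ℝ)))
  refine hg.mono' ?_ ?_
  · exact ((measurable_sinc.comp (measurable_id.sub_const _)).mul
      (measurable_sinc.comp (measurable_id.sub_const _))).aestronglyMeasurable
  · exact Filter.Eventually.of_forall fun x => by
      rw [Real.norm_eq_abs]; exact abs_sinc_mul_le _ _

theorem real_fact_zero_lt_one : Fact ((0:ℝ) < 1) := ⟨one_pos⟩

attribute [local instance] real_fact_zero_lt_one

/-- The phase `2πiy` as a complex number. -/
noncomputable def ec (y : ℝ) : ℂ := 2 * Real.pi * Complex.I * y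

/-- The function on the circle `ℝ/ℤ` agreeing with `t ↦ exp (2πiyt)` on `(0,1]`. -/
noncomputable def gfun (y : ℝ) : AddCircle (1:ℝ) → ℂ :=
  AddCircle.liftIoc 1 0 fun t : ℝ => Complex.exp (ec y * t)

lemma gfun_coe_apply {y x : ℝ} (hx : x ∈ Set.Ioc (0:ℝ) 1) :
    gfun y ↑x = Complex.exp (ec y * x) := by
  have hx' : x ∈ Set.Ioc (0:ℝ) (0 + 1) := by simpa using hx
  exact AddCircle.liftIoc_coe_apply hx'

lemma measurable_gfun (y : ℝ) : Measurable (gfun y) := by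
  have h : gfun y = (fun t : ℝ => Complex.exp (ec y * t)) ∘ (Subtype.val) ∘
      (AddCircle.measurableEquivIoc 1 0) := rfl
  rw [h]
  exact (Complex.measurable_exp.comp (measurable_const.mul Complex.measurable_ofReal)).comp
    (measurable_subtype_coe.comp (AddCircle.measurableEquivIoc 1 0).measurable)

lemma norm_exp_ec (y t : ℝ) : ‖Complex.exp (ec y * t)‖ = 1 := by
  rw [Complex.norm_exp]
  have h : (ec y * t).re = 0 := by
    simp [ec, Complex.mul_re, Complex.mul_im]
  rw [h, Real.exp_zero]

lemma memLp_gfun (y : ℝ) : MemLp (gfun y) 2 AddCircle.haarAddCircle := by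
  refine MemLp.of_bound (measurable_gfun y).aestronglyMeasurable 1
    (Filter.Eventually.of_forall fun x => ?_)
  exact le_of_eq (norm_exp_ec y _)

lemma fourierCoeff_gfun (y : ℝ) (hy : ∀ k : ℤ, y ≠ k) (k : ℤ) :
    fourierCoeff (gfun y) k =
      (Complex.exp (ec y) - 1) / (2 * Real.pi * Complex.I * ((y : ℂ) - (k : ℂ))) := by
  have hπ : (Real.pi : ℂ) ≠ 0 := Complex.ofReal_ne_zero.mpr Real.pi_ne_zero
  have hyk : (y : ℂ) - (k : ℂ) ≠ 0 := by
    rw [sub_ne_zero]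
    exact_mod_cast hy k
  have hc : (2 * (Real.pi:ℂ) * Complex.I * ((y:ℂ) - (k:ℂ))) ≠ 0 := by
    apply mul_ne_zero (mul_ne_zero (mul_ne_zero two_ne_zero hπ) Complex.I_ne_zero) hyk
  rw [show gfun y = AddCircle.liftIoc 1 0 (fun t : ℝ => Complex.exp (ec y * t)) from rfl,
    fourierCoeff_liftIoc_eq, fourierCoeffOn_eq_integral]
  have hfun : ∀ x : ℝ, (fourier (-k) (x : AddCircle ((0:ℝ) + 1 - 0))) •
      Complex.exp (ec y * x) =
      Complex.exp ((2 * (Real.pi:ℂ) * Complex.I * ((y:ℂ) - (k:ℂ))) * x) := by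
    intro x
    rw [fourier_coe_apply, smul_eq_mul, ← Complex.exp_add]
    congr 1
    push_cast [ec]
    ring
  simp_rw [hfun]
  rw [integral_exp_mul_complex hc]
  have h1 : (2 * (Real.pi:ℂ) * Complex.I * ((y:ℂ) - (k:ℂ))) * ((0:ℝ) + 1 : ℝ) =
      ec y + (-k : ℤ) * (2 * Real.pi * Complex.I) := by
    push_cast [ec]; ring
  have h0 : (2 * (Real.pi:ℂ) * Complex.I * ((y:ℂ) - (k:ℂ))) * ((0:ℝ):ℂ) = 0 := by
    push_cast; ring
  rw [h1, h0, Complex.exp_add, Complex.exp_zero, Complex.exp_int_mul_two_pi_mul_I, mul_one]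
  norm_num

noncomputable def gLp (y : ℝ) : Lp ℂ 2 (@AddCircle.haarAddCircle 1 _) :=
  (memLp_gfun y).toLp (gfun y)

lemma inner_gLp (y y' : ℝ) :
    (inner ℂ (gLp y) (gLp y') : ℂ) =
      ∫ x in (0:ℝ)..1, Complex.exp (ec (y' - y) * x) := by
  rw [MeasureTheory.L2.inner_def]
  have h1 : ∫ a, (inner ℂ (gLp y a) (gLp y' a) : ℂ) ∂AddCircle.haarAddCircle =
      ∫ a, (starRingEnd ℂ) (gfun y a) * gfun y' a ∂AddCircle.haarAddCircle := by
    apply integral_congr_ae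
    filter_upwards [(memLp_gfun y).coeFn_toLp, (memLp_gfun y').coeFn_toLp] with a ha ha'
    simp only [gLp]
    rw [ha, ha', RCLike.inner_apply']
  rw [h1]
  have h2 : ∫ a, (starRingEnd ℂ) (gfun y a) * gfun y' a ∂AddCircle.haarAddCircle =
      ∫ a, (starRingEnd ℂ) (gfun y a) * gfun y' a ∂(volume : Measure (AddCircle (1:ℝ))) := by
    rw [AddCircle.volume_eq_smul_haarAddCircle]
    simp
  rw [h2, ← AddCircle.intervalIntegral_preimage 1 0
    (fun z => (starRingEnd ℂ) (gfun y z) * gfun y' z)]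
  rw [intervalIntegral.integral_of_le (by norm_num : (0:ℝ) ≤ 0 + 1),
    intervalIntegral.integral_of_le (by norm_num : (0:ℝ) ≤ 1)]
  simp only [zero_add]
  apply setIntegral_congr_fun measurableSet_Ioc
  intro x hx
  have hx' : x ∈ Set.Ioc (0:ℝ) 1 := by simpa using hx
  simp only []
  rw [gfun_coe_apply hx', gfun_coe_apply hx', ← Complex.exp_conj, ← Complex.exp_add]
  congr 1
  simp only [ec, map_mul, Complex.conj_I, Complex.conj_ofReal, map_ofNat]
  push_cast
  ring

lemma fourierCoeff_gLp (y : ℝ) (k : ℤ) :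
    fourierCoeff (⇑(gLp y)) k = fourierCoeff (gfun y) k := by
  apply integral_congr_ae
  filter_upwards [(memLp_gfun y).coeFn_toLp] with t ht
  simp only [gLp] at ht ⊢
  rw [ht]

lemma sinc_hasSum (y : ℝ) (hy : ∀ k : ℤ, y ≠ k) (d : ℤ) :
    HasSum (fun k : ℤ => sinc (y - k) * sinc (y - d - k))
      (if d = 0 then 1 else 0) := by
  have hπ : Real.pi ≠ 0 := Real.pi_ne_zero
  have hπc : (Real.pi : ℂ) ≠ 0 := Complex.ofReal_ne_zero.mpr hπ
  set y' : ℝ := y - d with hy'def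
  have hy' : ∀ k : ℤ, y' ≠ k := by
    intro k h
    refine hy (k + d) ?_
    push_cast
    rw [hy'def] at h
    linarith
  have H := HilbertBasis.hasSum_inner_mul_inner fourierBasis (gLp y) (gLp y')
  have hval : (inner ℂ (gLp y) (gLp y') : ℂ) = if d = 0 then 1 else 0 := by
    rw [inner_gLp]
    have hyy : y' - y = -(d:ℝ) := by rw [hy'def]; ring
    rw [hyy]
    rcases eq_or_ne d 0 with hd | hd
    · simp only [hd, if_pos rfl, Int.cast_zero, neg_zero]
      have h0 : ∀ x : ℝ, Complex.exp (ec 0 * x) = 1 := by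
        intro x; simp [ec]
      simp only [h0]
      simp
    · rw [if_neg hd]
      have hdc : ((d:ℝ) : ℂ) ≠ 0 := by exact_mod_cast Int.cast_ne_zero.mpr hd
      have hc : ec (-(d:ℝ)) ≠ 0 := by
        simp only [ec]
        push_cast
        exact mul_ne_zero (mul_ne_zero (mul_ne_zero two_ne_zero hπc) Complex.I_ne_zero)
          (neg_ne_zero.mpr hdc)
      rw [integral_exp_mul_complex hc]
      have h1 : ec (-(d:ℝ)) * ((1:ℝ):ℂ) = (-d : ℤ) * (2 * Real.pi * Complex.I) := by
        push_cast [ec]; ring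
      have h0 : ec (-(d:ℝ)) * ((0:ℝ):ℂ) = 0 := by push_cast [ec]; ring
      rw [h1, h0, Complex.exp_int_mul_two_pi_mul_I, Complex.exp_zero]
      simp
  have hterm : ∀ k : ℤ,
      (inner ℂ (gLp y) (fourierBasis k) : ℂ) * (inner ℂ (fourierBasis k) (gLp y') : ℂ)
        = (starRingEnd ℂ) (fourierCoeff (gfun y) k) * fourierCoeff (gfun y') k := by
    intro k
    have h1 : (inner ℂ (fourierBasis k) (gLp y') : ℂ) = fourierCoeff (gfun y') k := by
      rw [← fourierBasis.repr_apply_apply, fourierBasis_repr, fourierCoeff_gLp]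
    have h2 : (inner ℂ (gLp y) (fourierBasis k) : ℂ)
        = (starRingEnd ℂ) (fourierCoeff (gfun y) k) := by
      rw [← inner_conj_symm, ← fourierBasis.repr_apply_apply, fourierBasis_repr,
        fourierCoeff_gLp]
    rw [h1, h2]
  have hre : ∀ k : ℤ,
      ((sinc (y - k) * sinc (y' - k) : ℝ) : ℂ)
        = (((-1:ℝ) ^ d : ℝ) : ℂ) *
          ((starRingEnd ℂ) (fourierCoeff (gfun y) k) * fourierCoeff (gfun y') k) := by
    intro k
    rw [fourierCoeff_gfun y hy k, fourierCoeff_gfun y' hy' k]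
    have hyk : y - k ≠ 0 := sub_ne_zero.mpr (hy k)
    have hy'k : y' - k ≠ 0 := sub_ne_zero.mpr (hy' k)
    have hykc : ((y:ℂ) - (k:ℂ)) ≠ 0 := by
      rw [sub_ne_zero]; exact_mod_cast hy k
    have hy'kc : ((y':ℂ) - (k:ℂ)) ≠ 0 := by
      rw [sub_ne_zero]; exact_mod_cast hy' k
    rw [sinc_of_ne hyk, sinc_of_ne hy'k]
    have hs1 : Real.sin (Real.pi * (y - k)) = (-1) ^ k * Real.sin (Real.pi * y) := by
      rw [show Real.pi * (y - k) = Real.pi * y - k * Real.pi by ring]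
      exact Real.sin_sub_int_mul_pi _ k
    have hs2 : Real.sin (Real.pi * (y' - k)) = (-1) ^ (k + d) * Real.sin (Real.pi * y) := by
      rw [show Real.pi * (y' - k) = Real.pi * y - (↑(k + d) : ℝ) * Real.pi by
        rw [hy'def]; push_cast; ring]
      exact Real.sin_sub_int_mul_pi _ (k + d)
    have hexpy' : Complex.exp (ec y') = Complex.exp (ec y) := by
      rw [show ec y' = ec y + (-d : ℤ) * (2 * Real.pi * Complex.I) by
          simp only [ec, hy'def]; push_cast; ring,
        Complex.exp_add, Complex.exp_int_mul_two_pi_mul_I, mul_one]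
    have hsc : ((Real.sin (2 * Real.pi * y) : ℂ)) ^ 2 + ((Real.cos (2 * Real.pi * y) : ℂ)) ^ 2
        = 1 := by
      have := Real.sin_sq_add_cos_sq (2 * Real.pi * y)
      exact_mod_cast this
    have hA : Complex.exp (ec y) =
        ((Real.cos (2 * Real.pi * y) : ℂ)) + ((Real.sin (2 * Real.pi * y) : ℂ)) * Complex.I := by
      rw [show ec y = ((2 * Real.pi * y : ℝ) : ℂ) * Complex.I by push_cast [ec]; ring,
        Complex.exp_mul_I, Complex.ofReal_cos, Complex.ofReal_sin]
    have hconjnum : (starRingEnd ℂ) (Complex.exp (ec y) - 1) * (Complex.exp (ec y') - 1)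
        = ((2 - 2 * Real.cos (2 * Real.pi * y) : ℝ) : ℂ) := by
      rw [hexpy', hA]
      rw [map_sub, map_add, Complex.conj_ofReal, map_mul, Complex.conj_ofReal, Complex.conj_I,
        map_one]
      push_cast
      linear_combination (-(Complex.sin (2 * (Real.pi:ℂ) * (y:ℂ))) ^ 2) * Complex.I_sq +
        Complex.sin_sq_add_cos_sq (2 * (Real.pi:ℂ) * (y:ℂ))
    have hB1 : (starRingEnd ℂ) (2 * (Real.pi:ℂ) * Complex.I * ((y:ℂ) - (k:ℂ)))
        = -(2 * (Real.pi:ℂ) * Complex.I * ((y:ℂ) - (k:ℂ))) := by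
      simp only [map_mul, map_sub, Complex.conj_I, Complex.conj_ofReal, map_ofNat,
        map_intCast]
      ring
    rw [map_div₀]
    conv_rhs => rw [div_mul_div_comm, hconjnum, hB1]
    have hden : -(2 * (Real.pi:ℂ) * Complex.I * ((y:ℂ) - (k:ℂ))) *
        (2 * (Real.pi:ℂ) * Complex.I * ((y':ℂ) - (k:ℂ)))
        = ((4 * Real.pi ^ 2 * (y - k) * (y' - k) : ℝ) : ℂ) := by
      push_cast
      linear_combination (-(4 * (Real.pi:ℂ) ^ 2 * ((y:ℂ) - (k:ℂ)) * ((y':ℂ) - (k:ℂ)))) *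
        Complex.I_sq
    rw [hden, ← Complex.ofReal_div, ← Complex.ofReal_mul]
    rw [Complex.ofReal_inj]
    have hcos : Real.cos (2 * Real.pi * y) = 1 - 2 * Real.sin (Real.pi * y) ^ 2 := by
      rw [show 2 * Real.pi * y = 2 * (Real.pi * y) by ring, Real.cos_two_mul]
      nlinarith [Real.sin_sq_add_cos_sq (Real.pi * y)]
    have hkk : ((-1:ℝ) ^ k) * ((-1:ℝ) ^ (k + d)) = (-1:ℝ) ^ d := by
      rw [← zpow_add₀ (by norm_num : (-1:ℝ) ≠ 0), show k + (k + d) = 2 * k + d by ring,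
        zpow_add₀ (by norm_num : (-1:ℝ) ≠ 0), Even.neg_one_zpow ⟨k, by ring⟩, one_mul]
    rw [hs1, hs2, hcos]
    have hπu : Real.pi * (y - k) ≠ 0 := mul_ne_zero hπ hyk
    have hπv : Real.pi * (y' - k) ≠ 0 := mul_ne_zero hπ hy'k
    field_simp
    linear_combination (4 * Real.sin (Real.pi * y) ^ 2) * hkk
  have H2 := H.mul_left ((((-1:ℝ) ^ d : ℝ)) : ℂ)
  rw [hval] at H2
  simp only [hterm] at H2
  simp only [← hre] at H2
  have hval2 : ((((-1:ℝ) ^ d : ℝ)) : ℂ) * (if d = 0 then 1 else 0)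
      = (((if d = 0 then (1:ℝ) else 0) : ℝ) : ℂ) := by
    rcases eq_or_ne d 0 with hd | hd <;> simp [hd]
  rw [hval2] at H2
  exact Complex.hasSum_ofReal.mp H2

open Set in
/-- Integer translates of sinc are orthonormal in `L²(ℝ)`. -/
theorem sinc_translates_orthonormal (m n : ℤ) :
    Integrable (fun x : ℝ => sinc (x - m) * sinc (x - n)) ∧
      (∫ x : ℝ, sinc (x - m) * sinc (x - n)) = if m = n then 1 else 0 := by
  have hInt := sinc_mul_integrable m n
  refine ⟨hInt, ?_⟩
  set F : ℝ → ℝ := fun x => sinc (x - m) * sinc (x - n) with hF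
  have hFmeas : Measurable F := (measurable_sinc.comp (measurable_id.sub_const _)).mul
    (measurable_sinc.comp (measurable_id.sub_const _))
  have hmeasS : ∀ k : ℤ, MeasurableSet (Ioc (k:ℝ) (k+1)) := fun _ => measurableSet_Ioc
  have hdisj : Pairwise (Function.onFun Disjoint fun k : ℤ => Ioc (k:ℝ) (k+1)) := by
    have h := pairwise_disjoint_Ioc_add_intCast (0:ℝ)
    simpa only [zero_add] using h
  have hcover : (⋃ k : ℤ, Ioc (k:ℝ) (k+1)) = Set.univ := iUnion_Ioc_intCast ℝ
  have htrans : ∀ k : ℤ, ∫ x in Ioc (k:ℝ) (k+1), F x = ∫ x in Ioc (0:ℝ) 1, F (x + k) := by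
    intro k
    rw [← intervalIntegral.integral_of_le (by linarith : (k:ℝ) ≤ k + 1),
      ← intervalIntegral.integral_of_le (by norm_num : (0:ℝ) ≤ 1)]
    rw [intervalIntegral.integral_comp_add_right F (k:ℝ), zero_add, add_comm (1:ℝ) (k:ℝ)]
  have hlint : ∀ k : ℤ, ∫⁻ x in Ioc (0:ℝ) 1, ‖F (x + k)‖₊ = ∫⁻ x in Ioc (k:ℝ) (k+1), ‖F x‖₊ := by
    intro k
    have hpre : (fun x : ℝ => x + (k:ℝ)) ⁻¹' Ioc (k:ℝ) (k+1) = Ioc (0:ℝ) 1 := by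
      ext x
      simp only [Set.mem_preimage, Set.mem_Ioc]
      constructor <;> intro h <;> exact ⟨by linarith [h.1], by linarith [h.2]⟩
    rw [← hpre]
    exact (measurePreserving_add_right volume (k:ℝ)).setLIntegral_comp_preimage_emb
      (MeasurableEquiv.addRight (k:ℝ)).measurableEmbedding
      (fun x => (‖F x‖₊ : ENNReal)) (Ioc (k:ℝ) (k+1))
  have hsum_lint : ∑' k : ℤ, ∫⁻ x in Ioc (0:ℝ) 1, ‖F (x + k)‖₊ ≠ ⊤ := by
    simp only [hlint]
    rw [← lintegral_iUnion hmeasS hdisj, hcover, Measure.restrict_univ]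
    exact hInt.2.ne
  have hswap := integral_tsum (μ := volume.restrict (Ioc (0:ℝ) 1))
    (f := fun (k : ℤ) (x : ℝ) => F (x + k))
    (fun k => (hFmeas.comp (measurable_add_const _)).aestronglyMeasurable) hsum_lint
  have hae : ∀ᵐ x ∂(volume.restrict (Ioc (0:ℝ) 1)),
      (∑' k : ℤ, F (x + k)) = if m = n then 1 else 0 := by
    have hbad : volume (Set.range (fun j : ℤ => (j:ℝ) + m)) = 0 :=
      (Set.countable_range _).measure_zero _
    refine ae_restrict_of_ae ?_
    filter_upwards [measure_eq_zero_iff_ae_notMem.mp hbad] with x hx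
    have hy : ∀ k : ℤ, x - m ≠ k := by
      intro k h
      exact hx ⟨k, by show (k:ℝ) + m = x; linarith⟩
    have Hs := sinc_hasSum (x - m) hy (n - m)
    have Hs2 := ((Equiv.neg ℤ).hasSum_iff).mpr Hs
    have heq : ((fun j : ℤ => sinc (x - m - j) * sinc (x - m - ((n - m : ℤ) : ℝ) - j)) ∘ (Equiv.neg ℤ))
        = fun k : ℤ => F (x + k) := by
      funext k
      simp only [Function.comp_apply, Equiv.neg_apply, hF]
      push_cast
      ring_nf
    rw [heq] at Hs2
    have ht := Hs2.tsum_eq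
    rcases eq_or_ne m n with hmn | hmn
    · simpa [hmn] using ht
    · have hnm : n - m ≠ 0 := fun h => hmn (by omega)
      simpa [hmn, hnm] using ht
  calc ∫ x : ℝ, F x = ∫ x in ⋃ k : ℤ, Ioc (k:ℝ) (k+1), F x := by
        rw [hcover, Measure.restrict_univ]
    _ = ∑' k : ℤ, ∫ x in Ioc (k:ℝ) (k+1), F x :=
        integral_iUnion hmeasS hdisj (by rw [hcover]; exact hInt.integrableOn)
    _ = ∑' k : ℤ, ∫ x in Ioc (0:ℝ) 1, F (x + k) := tsum_congr htrans
    _ = ∫ x in Ioc (0:ℝ) 1, ∑' k : ℤ, F (x + k) := hswap.symm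
    _ = ∫ x in Ioc (0:ℝ) 1, (if m = n then (1:ℝ) else 0) := integral_congr_ae hae
    _ = if m = n then 1 else 0 := by
        simp [Real.volume_Ioc]
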